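/- Closest-point projection lemma, κ = 0 case: Let U be a complete length metric space satisfying the CAT(0) comparison and let K ⊆ U be a nonempty, closed, convex subset. Then for every point p ∈ U there exists a unique point z ∈ K that minimizes the distance to p, i.e. a unique z ∈ K with dist(p, z) = infDist(p, K). -/

import Mathlib

/-- Comparison angle (model angle for curvature `0`) at `p` between `x` and `y`. -/
noncomputable def cmpAngle {X : Type*} [MetricSpace X] (p x y : X) : ℝ :=
  Real.arccos ((dist p x ^ 2 + dist p y ^ 2 - dist x y ^ 2) / (2 * dist p x * dist p y))

/-- The CBB(0) four-point comparison: curvature `≥ 0` in the sense of Alexandrov. -/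
def CBB0Cmp (X : Type*) [MetricSpace X] : Prop :=
  ∀ p x₁ x₂ x₃ : X, p ≠ x₁ → p ≠ x₂ → p ≠ x₃ →
    cmpAngle p x₁ x₂ + cmpAngle p x₂ x₃ + cmpAngle p x₃ x₁ ≤ 2 * Real.pi

/-- The CAT(0) four-point comparison. -/
def CAT0Cmp (X : Type*) [MetricSpace X] : Prop :=
  ∀ p₁ p₂ x₁ x₂ : X, p₁ ≠ p₂ → p₁ ≠ x₁ → p₁ ≠ x₂ → p₂ ≠ x₁ → p₂ ≠ x₂ →
    cmpAngle p₁ x₁ x₂ ≤ cmpAngle p₁ p₂ x₁ + cmpAngle p₁ p₂ x₂ ∨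
    cmpAngle p₂ x₁ x₂ ≤ cmpAngle p₂ p₁ x₁ + cmpAngle p₂ p₁ x₂

/-- Midpoint characterization of the length condition (for complete spaces). -/
def LengthMid (X : Type*) [MetricSpace X] : Prop :=
  ∀ x y : X, ∀ ε : ℝ, 0 < ε → ∃ z : X,
    dist x z ≤ dist x y / 2 + ε ∧ dist z y ≤ dist x y / 2 + ε

/-- A geodesic from `p` to `q`, affinely parametrized by `[0,1]`. -/
def IsGeodesicP {X : Type*} [MetricSpace X] (γ : ℝ → X) (p q : X) : Prop :=
  γ 0 = p ∧ γ 1 = q ∧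
    ∀ s ∈ Set.Icc (0:ℝ) 1, ∀ t ∈ Set.Icc (0:ℝ) 1, dist (γ s) (γ t) = |s - t| * dist p q

/-- A metrically convex subset: together with any two points it contains
every point lying between them. -/
def MConvexSet {X : Type*} [MetricSpace X] (K : Set X) : Prop :=
  ∀ x ∈ K, ∀ y ∈ K, ∀ z : X, dist x z + dist z y = dist x y → z ∈ K

set_option maxHeartbeats 1600000
set_option linter.unusedVariables false
open Filter Topology

private lemma le_of_sq_le_sq2 {x y : ℝ} (hx : 0 ≤ x) (hy : 0 ≤ y) (h : x^2 ≤ y^2) : x ≤ y := by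
  nlinarith

private lemma case2R {d r1 r2 t a b ε w δ : ℝ}
    (hε : 0 < ε) (hεs : 4*ε ≤ t)
    (ha' : a ≤ t/2 + ε) (hb' : b ≤ t/2 + ε) (hab : t ≤ a + b)
    (hd0 : 0 ≤ d) (hr10 : 0 ≤ r1) (hr20 : 0 ≤ r2)
    (tda : d ≤ r1 + a) (tza2 : a ≤ d + r1) (tza3 : r1 ≤ d + a)
    (tdb : d ≤ r2 + b) (tzb2 : b ≤ d + r2) (tzb3 : r2 ≤ d + b)
    (hw0 : 0 ≤ w) (hw2 : w^2 = t*ε)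
    (hδ0 : 0 ≤ δ)
    (hδsq : 4*(a*b)*δ^2 = (a+b)^2 - t^2)
    (hsum : b*(d^2+a^2-r1^2) + a*(d^2+b^2-r2^2) ≤ 4*d*(a*b)*δ) :
    d^2 ≤ (r1^2+r2^2)/2 - t^2/4 + 20*(1+d+r1+r2+t)^2*(ε+w) := by
  have ht0 : 0 < t := by linarith
  have halow : t/2 - ε ≤ a := by linarith
  have hblow : t/2 - ε ≤ b := by linarith
  have ha0 : 0 < a := by linarith
  have hb0 : 0 < b := by linarith
  -- t^2 * δ^2 ≤ 20 * t * ε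
  have p1 : (a+b-t)*(a+b+t) ≤ (2*ε)*(2*t+2*ε) :=
    mul_le_mul (by linarith) (by linarith) (by linarith) (by linarith)
  have p1b : ε*ε ≤ ε*(t/4) := mul_le_mul_of_nonneg_left (by linarith) hε.le
  have e1 : (a+b)^2 - t^2 ≤ 5*t*ε := by linarith [p1, p1b]
  have p2 : (t/4)*(t/4) ≤ a*b := mul_le_mul (by linarith) (by linarith) (by linarith) (by linarith)
  have e2 : t^2/4 ≤ 4*(a*b) := by linarith
  have h1 : t^2*δ^2 ≤ 20*(t*ε) := by
    have := mul_le_mul_of_nonneg_right e2 (sq_nonneg δ)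
    linarith [this]
  have htd : t*δ ≤ 5*w := by
    apply le_of_sq_le_sq2 (by positivity) (by positivity)
    have : (t*δ)^2 = t^2*δ^2 := by ring
    linarith [h1, hw2, sq_nonneg w]
  -- bounds on Q1, Q2
  have hQ1u : d^2+a^2-r1^2 ≤ 2*(d*a) := by
    linarith [mul_nonneg (show (0:ℝ) ≤ r1 - (d-a) by linarith) (show (0:ℝ) ≤ r1 + (d-a) by linarith)]
  have hQ1l : -(2*(d*a)) ≤ d^2+a^2-r1^2 := by
    linarith [mul_le_mul tza3 tza3 hr10 (by linarith : (0:ℝ) ≤ d + a)]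
  have hQ2u : d^2+b^2-r2^2 ≤ 2*(d*b) := by
    linarith [mul_nonneg (show (0:ℝ) ≤ r2 - (d-b) by linarith) (show (0:ℝ) ≤ r2 + (d-b) by linarith)]
  have hQ2l : -(2*(d*b)) ≤ d^2+b^2-r2^2 := by
    linarith [mul_le_mul tzb3 tzb3 hr20 (by linarith : (0:ℝ) ≤ d + b)]
  -- replace b, a by t/2 up to error
  have hba : (t/2)*(d^2+a^2-r1^2) ≤ b*(d^2+a^2-r1^2) + 2*(d*a)*ε := by
    rcases le_or_gt 0 (d^2+a^2-r1^2) with h | h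
    · linarith [mul_le_mul_of_nonneg_right hblow h, mul_le_mul_of_nonneg_left hQ1u hε.le]
    · linarith [mul_le_mul_of_nonpos_right hb' h.le, mul_le_mul_of_nonneg_left hQ1l hε.le]
  have hab2 : (t/2)*(d^2+b^2-r2^2) ≤ a*(d^2+b^2-r2^2) + 2*(d*b)*ε := by
    rcases le_or_gt 0 (d^2+b^2-r2^2) with h | h
    · linarith [mul_le_mul_of_nonneg_right halow h, mul_le_mul_of_nonneg_left hQ2u hε.le]
    · linarith [mul_le_mul_of_nonpos_right ha' h.le, mul_le_mul_of_nonneg_left hQ2l hε.le]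
  -- bound the right-hand side
  have habU : a*b ≤ 9*t^2/16 := by
    have := mul_le_mul (show a ≤ 3*t/4 by linarith) (show b ≤ 3*t/4 by linarith) hb0.le (by linarith : (0:ℝ) ≤ 3*t/4)
    linarith
  have s2 : 4*d*(a*b)*δ ≤ (45/4)*(d*(t*w)) := by
    have s1 := mul_le_mul_of_nonneg_left habU (by positivity : (0:ℝ) ≤ 4*d*δ)
    have s1' := mul_le_mul_of_nonneg_left htd (by positivity : (0:ℝ) ≤ (9/4)*(d*t))
    linarith [s1, s1']
  have s3 : 2*(d*a)*ε + 2*(d*b)*ε ≤ 3*(d*(t*ε)) := by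
    have := mul_le_mul_of_nonneg_left (show a+b ≤ 3*t/2 by linarith) (by positivity : (0:ℝ) ≤ 2*d*ε)
    linarith [this]
  -- cancel t
  have hfin : (d^2+a^2-r1^2) + (d^2+b^2-r2^2) ≤ (45/2)*(d*w) + 6*(d*ε) := by
    have hmul : t * ((d^2+a^2-r1^2) + (d^2+b^2-r2^2)) ≤ t * ((45/2)*(d*w) + 6*(d*ε)) := by
      linarith [hba, hab2, hsum, s2, s3]
    exact le_of_mul_le_mul_left hmul ht0
  have ha2 : t^2/2 - 2*(t*ε) ≤ a^2+b^2 := by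
    linarith [mul_le_mul halow halow (by linarith) ha0.le, mul_le_mul hblow hblow (by linarith) hb0.le,
      mul_pos hε hε]
  -- final assembly
  obtain ⟨C, hC⟩ : ∃ C : ℝ, C = 1+d+r1+r2+t := ⟨_, rfl⟩
  rw [← hC]
  have hC1 : 1 ≤ C := by rw [hC]; linarith
  have hCd : d ≤ C := by rw [hC]; linarith
  have hCt : t ≤ C := by rw [hC]; linarith
  have hC0 : (0:ℝ) ≤ C := by linarith
  have hCC : C ≤ C^2 := by linarith [mul_le_mul_of_nonneg_right hC1 hC0]
  have m1 : d*w ≤ C^2*w := by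
    have h1 := mul_le_mul_of_nonneg_right hCd hw0
    have h2 := mul_le_mul_of_nonneg_right hCC hw0
    linarith [h1, h2]
  have m2 : d*ε ≤ C^2*ε := by
    have h1 := mul_le_mul_of_nonneg_right hCd hε.le
    have h2 := mul_le_mul_of_nonneg_right hCC hε.le
    linarith [h1, h2]
  have m3 : t*ε ≤ C^2*ε := by
    have h1 := mul_le_mul_of_nonneg_right hCt hε.le
    have h2 := mul_le_mul_of_nonneg_right hCC hε.le
    linarith [h1, h2]
  have pos1 : (0:ℝ) ≤ C^2*ε := by positivity
  have pos2 : (0:ℝ) ≤ C^2*w := by positivity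
  linarith [hfin, ha2, m1, m2, m3, pos1, pos2]

private lemma case1R {d r1 r2 t a b ε w c u c' v : ℝ}
    (hε : 0 < ε) (hεs : 4*ε ≤ t)
    (ha' : a ≤ t/2 + ε) (hb' : b ≤ t/2 + ε)
    (ha0 : 0 ≤ a) (hb0 : 0 ≤ b)
    (hd0 : 0 ≤ d) (hr10 : 0 ≤ r1) (hr20 : 0 ≤ r2)
    (htr1 : r1 ≤ r2 + t) (htr2 : r2 ≤ r1 + t)
    (hw0 : 0 ≤ w) (hw2 : w^2 = t*ε)
    (hpy : c^2 + u^2 = 1) (hpy' : c'^2 + v^2 = 1)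
    (hcosθ : 2*r1*r2*(c*c'-u*v) = r1^2 + r2^2 - t^2)
    (hA : d^2 + r1^2 - 2*d*r1*c ≤ a^2) (hB : d^2 + r2^2 - 2*d*r2*c' ≤ b^2) :
    d^2 ≤ (r1^2+r2^2)/2 - t^2/4 + 20*(1+d+r1+r2+t)^2*(ε+w) := by
  have ht0 : 0 < t := by linarith
  set Z : ℂ := ⟨d*c, d*u⟩ with hZ
  set M : ℂ := ⟨(r1 + r2*(c*c'-u*v))/2, (r2*(u*c'+c*v))/2⟩ with hM
  have hZsub : Z - M = ⟨d*c - (r1 + r2*(c*c'-u*v))/2, d*u - (r2*(u*c'+c*v))/2⟩ := by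
    rw [hZ, hM]; rfl
  -- |Z| = d
  have nZ : ‖Z‖ = d := by
    rw [Complex.norm_def, hZ, Complex.normSq_mk,
      show d*c*(d*c) + d*u*(d*u) = d^2*(c^2+u^2) by ring, hpy, mul_one, Real.sqrt_sq hd0]
  have hq : (c*c'-u*v)^2 + (u*c'+c*v)^2 = 1 := by
    linear_combination (c'^2+v^2)*hpy + hpy'
  -- normSq M
  have nM2 : Complex.normSq M = (r1^2+r2^2)/2 - t^2/4 := by
    rw [hM, Complex.normSq_mk]
    linear_combination (1/4)*hcosθ + (r2^2/4)*hq
  -- normSq (Z - M)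
  have nZM2 : Complex.normSq (Z - M)
      = ((d^2+r1^2-2*d*r1*c) + (d^2+r2^2-2*d*r2*c'))/2 - t^2/4 := by
    rw [hZsub, Complex.normSq_mk]
    linear_combination (d^2 - d*r2*c')*hpy + (1/4)*hcosθ + (r2^2/4)*hq
  -- bounds
  have hZMle : Complex.normSq (Z - M) ≤ 2*w^2 := by
    have haa : a^2 ≤ (t/2+ε)^2 := by nlinarith
    have hbb : b^2 ≤ (t/2+ε)^2 := by nlinarith
    have : ((t/2+ε)^2 + (t/2+ε)^2)/2 - t^2/4 = t*ε + ε^2 := by ring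
    have hee : ε^2 ≤ t*ε/4 := by nlinarith
    nlinarith [nZM2, hA, hB, hw2]
  have absZM : ‖Z - M‖ ≤ 2*w := by
    apply le_of_sq_le_sq2 (norm_nonneg _) (by positivity)
    rw [Complex.sq_norm]
    nlinarith [hZMle, sq_nonneg w, hw2]
  have absM : ‖M‖ ≤ (r1+r2)/2 := by
    apply le_of_sq_le_sq2 (norm_nonneg _) (by positivity)
    rw [Complex.sq_norm, nM2]
    nlinarith [mul_le_mul htr1 htr1 hr10 (by linarith : (0:ℝ) ≤ r2 + t),
      mul_le_mul htr2 htr2 hr20 (by linarith : (0:ℝ) ≤ r1 + t)]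
  have htri : d ≤ ‖M‖ + 2*w := by
    have h1 : ‖Z‖ ≤ ‖M‖ + ‖Z - M‖ := by
      have := norm_add_le M (Z - M)
      rw [show M + (Z - M) = Z by ring] at this
      exact this
    rw [nZ] at h1
    linarith
  -- final assembly
  have absM0 : 0 ≤ ‖M‖ := norm_nonneg _
  have absM2 : ‖M‖ ^ 2 = (r1^2+r2^2)/2 - t^2/4 := by rw [Complex.sq_norm, nM2]
  have hdsq : d^2 ≤ (r1^2+r2^2)/2 - t^2/4 + 4*(‖M‖)*w + 4*w^2 := by
    nlinarith [htri, absM0, hw0, absM2]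
  obtain ⟨C, hC⟩ : ∃ C : ℝ, C = 1+d+r1+r2+t := ⟨_, rfl⟩
  rw [← hC]
  have hC1 : 1 ≤ C := by rw [hC]; linarith
  have hCr : r1 + r2 ≤ C := by rw [hC]; linarith
  have hCt : t ≤ C := by rw [hC]; linarith
  have hC0 : (0:ℝ) ≤ C := by linarith
  have hCC : C ≤ C^2 := by linarith [mul_le_mul_of_nonneg_right hC1 hC0]
  have m1 : 4*(‖M‖)*w ≤ 2*(C^2*w) := by
    have h1 : ‖M‖ ≤ C/2 := by linarith
    have h2 := mul_le_mul_of_nonneg_right h1 hw0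
    have h3 := mul_le_mul_of_nonneg_right hCC hw0
    linarith [h2, h3]
  have m2 : 4*w^2 ≤ 4*(C^2*ε) := by
    have h1 := mul_le_mul_of_nonneg_right hCt hε.le
    have h2 := mul_le_mul_of_nonneg_right hCC hε.le
    linarith [hw2, h1, h2]
  have pos1 : (0:ℝ) ≤ C^2*ε := by positivity
  have pos2 : (0:ℝ) ≤ C^2*w := by positivity
  linarith [hdsq, m1, m2, pos1, pos2]

private lemma trig1 {γ α₁ α₂ : ℝ} (hγ0 : 0 ≤ γ) (hγπ : γ ≤ Real.pi)
    (h10 : 0 ≤ α₁) (h1π : α₁ ≤ Real.pi) (h20 : 0 ≤ α₂) (h2π : α₂ ≤ Real.pi)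
    (h : γ ≤ α₁ + α₂) :
    Real.cos α₁ + Real.cos α₂ ≤ 2 * Real.cos (γ / 2) := by
  have hpi := Real.pi_pos
  rw [Real.cos_add_cos]
  have hc2 : 0 ≤ Real.cos ((α₁ - α₂)/2) :=
    Real.cos_nonneg_of_mem_Icc ⟨by linarith, by linarith⟩
  have hc2' : Real.cos ((α₁ - α₂)/2) ≤ 1 := Real.cos_le_one _
  have hγ2 : 0 ≤ Real.cos (γ/2) :=
    Real.cos_nonneg_of_mem_Icc ⟨by linarith, by linarith⟩
  rcases le_or_gt 0 (Real.cos ((α₁ + α₂)/2)) with hpos | hneg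
  · have hmono : Real.cos ((α₁ + α₂)/2) ≤ Real.cos (γ/2) :=
      Real.cos_le_cos_of_nonneg_of_le_pi (by linarith) (by linarith) (by linarith)
    nlinarith
  · nlinarith

private lemma cos_cmpAngle {X : Type*} [MetricSpace X] (p x y : X) (hx : p ≠ x) (hy : p ≠ y) :
    Real.cos (cmpAngle p x y)
      = (dist p x ^ 2 + dist p y ^ 2 - dist x y ^ 2) / (2 * dist p x * dist p y) := by
  have h1 : 0 < dist p x := dist_pos.mpr hx
  have h2 : 0 < dist p y := dist_pos.mpr hy
  have t1 : dist x y ≤ dist x p + dist p y := dist_triangle x p y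
  have t2 : dist p y ≤ dist p x + dist x y := dist_triangle p x y
  have t3 : dist p x ≤ dist p y + dist y x := dist_triangle p y x
  rw [dist_comm x p] at t1
  rw [dist_comm y x] at t3
  apply Real.cos_arccos
  · rw [le_div_iff₀ (by positivity)]; nlinarith
  · rw [div_le_iff₀ (by positivity)]; nlinarith

private lemma cmpAngle_nonneg' {X : Type*} [MetricSpace X] (p x y : X) : 0 ≤ cmpAngle p x y :=
  Real.arccos_nonneg _

private lemma cmpAngle_le_pi' {X : Type*} [MetricSpace X] (p x y : X) : cmpAngle p x y ≤ Real.pi :=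
  Real.arccos_le_pi _

private lemma keyA {U : Type*} [MetricSpace U] (hcat : CAT0Cmp U) (p x y z : U) {ε : ℝ}
    (hε : 0 < ε) (hεs : 4 * ε ≤ dist x y)
    (hxz : dist x z ≤ dist x y / 2 + ε) (hzy : dist z y ≤ dist x y / 2 + ε) :
    dist p z ^ 2 ≤ (dist p x ^ 2 + dist p y ^ 2) / 2 - dist x y ^ 2 / 4
      + 20 * (1 + dist p z + dist p x + dist p y + dist x y) ^ 2
          * (ε + Real.sqrt (dist x y * ε)) := by
  have ht0 : 0 < dist x y := by linarith
  have hw0 : 0 ≤ Real.sqrt (dist x y * ε) := Real.sqrt_nonneg _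
  have hw2 : Real.sqrt (dist x y * ε) ^ 2 = dist x y * ε := Real.sq_sqrt (by positivity)
  have ha' : dist z x ≤ dist x y / 2 + ε := by rw [dist_comm]; exact hxz
  have hab : dist x y ≤ dist z x + dist z y := by
    rw [dist_comm z x]; exact dist_triangle x z y
  -- error bound is at least 2 t ε, and nonneg
  have hKt : dist x y ≤ (1 + dist p z + dist p x + dist p y + dist x y) := by
    have := dist_nonneg (x := p) (y := z); have := dist_nonneg (x := p) (y := x)
    have := dist_nonneg (x := p) (y := y); linarith
  have hK1 : (1:ℝ) ≤ 1 + dist p z + dist p x + dist p y + dist x y := by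
    have := dist_nonneg (x := p) (y := z); have := dist_nonneg (x := p) (y := x)
    have := dist_nonneg (x := p) (y := y); linarith
  have hKsq : dist x y ≤ (1 + dist p z + dist p x + dist p y + dist x y) ^ 2 := by
    have h := mul_le_mul hKt hK1 zero_le_one (by linarith : (0:ℝ) ≤ 1 + dist p z + dist p x + dist p y + dist x y)
    nlinarith [h]
  have hE20 : 2 * (dist x y * ε)
      ≤ 20 * (1 + dist p z + dist p x + dist p y + dist x y) ^ 2
          * (ε + Real.sqrt (dist x y * ε)) := by
    have h1 : 0 ≤ ε * ((1 + dist p z + dist p x + dist p y + dist x y)^2 - dist x y) :=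
      mul_nonneg hε.le (by linarith)
    have h2 : 0 ≤ (1 + dist p z + dist p x + dist p y + dist x y)^2
        * Real.sqrt (dist x y * ε) := mul_nonneg (by positivity) hw0
    linarith [h1, h2, mul_nonneg ht0.le hε.le]
  -- nondegeneracy of z
  have hzx : z ≠ x := by
    intro h; rw [h] at hzy; linarith
  have hzy' : z ≠ y := by
    intro h; rw [h] at hxz; linarith
  -- degenerate cases for p
  rcases eq_or_ne p z with rfl | hpz
  · have h1 : dist x y ≤ dist p x + dist p y := by
      rw [dist_comm p x]; exact dist_triangle x p y
    simp only [dist_self] at hE20 ⊢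
    linarith [mul_le_mul h1 h1 ht0.le (by positivity : (0:ℝ) ≤ dist p x + dist p y),
      sq_nonneg (dist p x - dist p y), hE20, mul_nonneg ht0.le hε.le]
  rcases eq_or_ne p x with rfl | hpx
  · simp only [dist_self] at hE20 ⊢
    linarith [hE20, mul_nonneg ht0.le hε.le,
      mul_le_mul hxz hxz (dist_nonneg (x := p) (y := z)) (by positivity),
      mul_le_mul_of_nonneg_left hεs hε.le]
  rcases eq_or_ne p y with rfl | hpy
  · have h1 : dist p z ≤ dist x p / 2 + ε := by rw [dist_comm p z]; exact hzy
    have h2 : dist p x = dist x p := dist_comm p x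
    rw [h2] at hE20 ⊢
    simp only [dist_self] at hE20 ⊢
    linarith [hE20, mul_nonneg ht0.le hε.le,
      mul_le_mul h1 h1 (dist_nonneg (x := p) (y := z)) (by positivity),
      mul_le_mul_of_nonneg_left hεs hε.le]
  -- main case
  have hd0 : (0:ℝ) ≤ dist p z := dist_nonneg
  have hr10 : (0:ℝ) ≤ dist p x := dist_nonneg
  have hr20 : (0:ℝ) ≤ dist p y := dist_nonneg
  have hdpos : 0 < dist p z := dist_pos.mpr hpz
  have hr1pos : 0 < dist p x := dist_pos.mpr hpx
  have hr2pos : 0 < dist p y := dist_pos.mpr hpy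
  have hapos : 0 < dist z x := dist_pos.mpr hzx
  have hbpos : 0 < dist z y := dist_pos.mpr hzy'
  have tda : dist p z ≤ dist p x + dist z x := by
    rw [dist_comm z x]; exact dist_triangle p x z
  have tza2 : dist z x ≤ dist p z + dist p x := by
    rw [dist_comm p z]; exact dist_triangle z p x
  have tza3 : dist p x ≤ dist p z + dist z x := dist_triangle p z x
  have tdb : dist p z ≤ dist p y + dist z y := by
    rw [dist_comm z y]; exact dist_triangle p y z
  have tzb2 : dist z y ≤ dist p z + dist p y := by
    rw [dist_comm p z]; exact dist_triangle z p y
  have tzb3 : dist p y ≤ dist p z + dist z y := dist_triangle p z y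
  have htr1 : dist p x ≤ dist p y + dist x y := by
    rw [dist_comm x y]; exact dist_triangle p y x
  have htr2 : dist p y ≤ dist p x + dist x y := dist_triangle p x y
  rcases hcat p z x y hpz hpx hpy hzx hzy' with hopt | hopt
  · -- CAT comparison at p : planar construction
    set θ := cmpAngle p x y with hθdef
    set β₁ := cmpAngle p z x with hβ₁def
    set β₂ := cmpAngle p z y with hβ₂def
    have hθ0 : 0 ≤ θ := Real.arccos_nonneg _
    have hθπ : θ ≤ Real.pi := Real.arccos_le_pi _
    have hβ₁0 : 0 ≤ β₁ := Real.arccos_nonneg _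
    have hβ₁π : β₁ ≤ Real.pi := Real.arccos_le_pi _
    have hβ₂0 : 0 ≤ β₂ := Real.arccos_nonneg _
    have hβ₂π : β₂ ≤ Real.pi := Real.arccos_le_pi _
    set φ := max 0 (θ - β₂) with hφdef
    have hφ0 : 0 ≤ φ := le_max_left _ _
    have hφβ : φ ≤ β₁ := max_le hβ₁0 (by linarith [hopt])
    have hφθ : φ ≤ θ := max_le hθ0 (by linarith)
    have hθφβ : θ - φ ≤ β₂ := by
      have := le_max_right 0 (θ - β₂); linarith
    have hθφ0 : 0 ≤ θ - φ := by linarith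
    have hc1 : Real.cos β₁ ≤ Real.cos φ :=
      Real.cos_le_cos_of_nonneg_of_le_pi hφ0 hβ₁π hφβ
    have hc2 : Real.cos β₂ ≤ Real.cos (θ - φ) :=
      Real.cos_le_cos_of_nonneg_of_le_pi hθφ0 hβ₂π hθφβ
    have hu : 0 ≤ Real.sin φ :=
      Real.sin_nonneg_of_nonneg_of_le_pi hφ0 (by linarith)
    have hv : 0 ≤ Real.sin (θ - φ) :=
      Real.sin_nonneg_of_nonneg_of_le_pi hθφ0 (by linarith)
    have hpy1 : Real.cos φ ^ 2 + Real.sin φ ^ 2 = 1 := Real.cos_sq_add_sin_sq φ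
    have hpy2 : Real.cos (θ-φ) ^ 2 + Real.sin (θ-φ) ^ 2 = 1 := Real.cos_sq_add_sin_sq (θ-φ)
    have hcosadd : Real.cos φ * Real.cos (θ-φ) - Real.sin φ * Real.sin (θ-φ)
        = Real.cos θ := by
      rw [← Real.cos_add, show φ + (θ - φ) = θ by ring]
    have hcosθv := cos_cmpAngle p x y hpx hpy
    rw [← hθdef] at hcosθv
    have hcosθ : 2 * dist p x * dist p y
        * (Real.cos φ * Real.cos (θ-φ) - Real.sin φ * Real.sin (θ-φ))
        = dist p x ^ 2 + dist p y ^ 2 - dist x y ^ 2 := by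
      rw [hcosadd, hcosθv]; field_simp
    have hcosβ₁ := cos_cmpAngle p z x hpz hpx
    rw [← hβ₁def] at hcosβ₁
    have hA : dist p z ^2 + dist p x ^2 - 2 * dist p z * dist p x * Real.cos φ
        ≤ dist z x ^ 2 := by
      have e : 2 * dist p z * dist p x * Real.cos β₁
          = dist p z ^2 + dist p x ^2 - dist z x ^2 := by
        rw [hcosβ₁]; field_simp
      linarith [e, mul_le_mul_of_nonneg_left hc1 (by positivity : (0:ℝ) ≤ 2 * dist p z * dist p x)]
    have hcosβ₂ := cos_cmpAngle p z y hpz hpy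
    rw [← hβ₂def] at hcosβ₂
    have hB : dist p z ^2 + dist p y ^2 - 2 * dist p z * dist p y * Real.cos (θ-φ)
        ≤ dist z y ^ 2 := by
      have e : 2 * dist p z * dist p y * Real.cos β₂
          = dist p z ^2 + dist p y ^2 - dist z y ^2 := by
        rw [hcosβ₂]; field_simp
      linarith [e, mul_le_mul_of_nonneg_left hc2 (by positivity : (0:ℝ) ≤ 2 * dist p z * dist p y)]
    exact case1R hε hεs ha' hzy hapos.le hbpos.le hd0 hr10 hr20 htr1 htr2 hw0 hw2
      hpy1 hpy2 hcosθ hA hB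
  · -- CAT comparison at z
    set γ := cmpAngle z x y with hγdef
    set α₁ := cmpAngle z p x with hα₁def
    set α₂ := cmpAngle z p y with hα₂def
    have hγ0 : 0 ≤ γ := Real.arccos_nonneg _
    have hγπ : γ ≤ Real.pi := Real.arccos_le_pi _
    set δ := Real.cos (γ / 2) with hδdef
    have hδ0 : 0 ≤ δ := Real.cos_nonneg_of_mem_Icc
      ⟨by linarith [Real.pi_pos], by linarith⟩
    have hδc : Real.cos γ = 2 * δ ^ 2 - 1 := by
      rw [hδdef, ← Real.cos_two_mul, show 2 * (γ/2) = γ by ring]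
    have hcγ := cos_cmpAngle z x y hzx hzy'
    rw [← hγdef] at hcγ
    have hδsq : 4 * (dist z x * dist z y) * δ ^ 2
        = (dist z x + dist z y) ^ 2 - dist x y ^ 2 := by
      have hN : (2 * dist z x * dist z y) * Real.cos γ
          = dist z x^2 + dist z y^2 - dist x y^2 := by
        rw [hcγ]; field_simp
      rw [hδc] at hN
      linarith [hN]
    have htr : Real.cos α₁ + Real.cos α₂ ≤ 2 * Real.cos (γ / 2) :=
      trig1 hγ0 hγπ (hα₁def ▸ cmpAngle_nonneg' z p x) (hα₁def ▸ cmpAngle_le_pi' z p x)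
      (hα₂def ▸ cmpAngle_nonneg' z p y) (hα₂def ▸ cmpAngle_le_pi' z p y) hopt
    have hcα₁ := cos_cmpAngle z p x (Ne.symm hpz) hzx
    rw [← hα₁def, dist_comm z p] at hcα₁
    have hcα₂ := cos_cmpAngle z p y (Ne.symm hpz) hzy'
    rw [← hα₂def, dist_comm z p] at hcα₂
    rw [hcα₁, hcα₂, ← hδdef] at htr
    rw [div_add_div _ _ (by positivity) (by positivity), div_le_iff₀ (by positivity)] at htr
    have hsum : dist z y * (dist p z^2 + dist z x^2 - dist p x^2)
        + dist z x * (dist p z^2 + dist z y^2 - dist p y^2)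
        ≤ 4 * dist p z * (dist z x * dist z y) * δ := by
      have hcancel : (2 * dist p z) * (dist z y * (dist p z^2 + dist z x^2 - dist p x^2)
          + dist z x * (dist p z^2 + dist z y^2 - dist p y^2))
          ≤ (2 * dist p z) * (4 * dist p z * (dist z x * dist z y) * δ) := by
        linarith [htr]
      exact le_of_mul_le_mul_left hcancel (by positivity)
    exact case2R hε hεs ha' hzy hab hd0 hr10 hr20 tda tza2 tza3 tdb tzb2 tzb3
      hw0 hw2 hδ0 hδsq hsum

private lemma keyC {U : Type*} [MetricSpace U] (hcat : CAT0Cmp U) (p x y z : U)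
    (hxz : dist x z = dist x y / 2) (hzy : dist z y = dist x y / 2) :
    dist p z ^ 2 ≤ (dist p x ^ 2 + dist p y ^ 2) / 2 - dist x y ^ 2 / 4 := by
  rcases eq_or_ne x y with rfl | hxy
  · have hz : z = x := by
      have : dist x z = 0 := by rw [hxz, dist_self]; ring
      rw [dist_comm] at this
      exact dist_eq_zero.mp this
    subst hz
    simp
  · have ht0 : 0 < dist x y := dist_pos.mpr hxy
    apply le_of_forall_pos_le_add
    intro δ hδ
    obtain ⟨Kv, hKv⟩ : ∃ Kv : ℝ,
        Kv = 20 * (1 + dist p z + dist p x + dist p y + dist x y)^2 := ⟨_, rfl⟩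
    have hK0 : 0 < Kv := by
      rw [hKv]
      have h1 : (0:ℝ) < 1 + dist p z + dist p x + dist p y + dist x y := by
        have := dist_nonneg (x := p) (y := z); have := dist_nonneg (x := p) (y := x)
        have := dist_nonneg (x := p) (y := y); have := dist_nonneg (x := x) (y := y)
        linarith
      positivity
    obtain ⟨ε, hεdef⟩ : ∃ ε : ℝ,
        ε = min (dist x y / 4) (min (δ/(2*Kv)) (δ^2/(4*Kv^2*dist x y))) := ⟨_, rfl⟩
    have hε0 : 0 < ε := by
      rw [hεdef]
      apply lt_min (by positivity) (lt_min (by positivity) (by positivity))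
    have hε1 : ε ≤ dist x y / 4 := hεdef ▸ min_le_left _ _
    have hε2 : ε ≤ δ/(2*Kv) := hεdef ▸ (min_le_right _ _).trans (min_le_left _ _)
    have hε3 : ε ≤ δ^2/(4*Kv^2*dist x y) := hεdef ▸ (min_le_right _ _).trans (min_le_right _ _)
    have h := keyA hcat p x y z hε0 (by linarith) (by rw [hxz]; linarith) (by rw [hzy]; linarith)
    rw [← hKv] at h
    have h1 : Kv * ε ≤ δ/2 := by
      have := mul_le_mul_of_nonneg_left hε2 hK0.le
      rw [show Kv * (δ/(2*Kv)) = δ/2 by field_simp] at this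
      linarith
    have h2 : Real.sqrt (dist x y * ε) ≤ δ/(2*Kv) := by
      have ha : dist x y * ε ≤ δ^2/(4*Kv^2) := by
        have := mul_le_mul_of_nonneg_left hε3 ht0.le
        rw [show dist x y * (δ^2/(4*Kv^2*dist x y)) = δ^2/(4*Kv^2) by field_simp] at this
        linarith
      calc Real.sqrt (dist x y * ε) ≤ Real.sqrt (δ^2/(4*Kv^2)) := Real.sqrt_le_sqrt ha
        _ = δ/(2*Kv) := by
            rw [show δ^2/(4*Kv^2) = (δ/(2*Kv))^2 by ring, Real.sqrt_sq (by positivity)]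
    have h3 : Kv * Real.sqrt (dist x y * ε) ≤ δ/2 := by
      have := mul_le_mul_of_nonneg_left h2 hK0.le
      rw [show Kv * (δ/(2*Kv)) = δ/2 by field_simp] at this
      linarith
    have hexp : Kv * (ε + Real.sqrt (dist x y * ε))
        = Kv * ε + Kv * Real.sqrt (dist x y * ε) := by ring
    linarith [h, hexp.le, hexp.ge]

private lemma midB {U : Type*} [MetricSpace U] [CompleteSpace U]
    (hlen : LengthMid U) (hcat : CAT0Cmp U) (x y : U) :
    ∃ z : U, dist x z = dist x y / 2 ∧ dist z y = dist x y / 2 := by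
  rcases eq_or_ne x y with rfl | hxy
  · exact ⟨x, by simp⟩
  have ht0 : 0 < dist x y := dist_pos.mpr hxy
  -- approximate midpoints
  have hch : ∀ n : ℕ, ∃ z : U,
      dist x z ≤ dist x y / 2 + dist x y / 8 * (1/(n+1)) ∧
      dist z y ≤ dist x y / 2 + dist x y / 8 * (1/(n+1)) := by
    intro n
    exact hlen x y _ (by positivity)
  choose f hf1 hf2 using hch
  obtain ⟨e, he⟩ : ∃ e : ℕ → ℝ, e = fun n : ℕ => dist x y / 8 * (1/(n+1)) := ⟨_, rfl⟩
  have he0 : ∀ n, 0 < e n := by intro n; rw [he]; positivity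
  have heb : ∀ n, e n ≤ dist x y / 8 := by
    intro n; rw [he]
    have h1 : (1:ℝ)/(n+1) ≤ 1 := by
      rw [div_le_one (by positivity)]; push_cast; linarith [Nat.cast_nonneg (α := ℝ) n]
    nlinarith [h1]
  have hf1' : ∀ n, dist x (f n) ≤ dist x y / 2 + e n := by
    intro n; simp only [he]; exact hf1 n
  have hf2' : ∀ n, dist (f n) y ≤ dist x y / 2 + e n := by
    intro n; simp only [he]; exact hf2 n
  have hmono : ∀ N n : ℕ, N ≤ n → e n ≤ e N := by
    intro N n h; simp only [he]
    have h1 : (N:ℝ)+1 ≤ (n:ℝ)+1 := by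
      have : (N:ℝ) ≤ (n:ℝ) := Nat.cast_le.mpr h
      linarith
    have h2 := one_div_le_one_div_of_le (by positivity : (0:ℝ) < (N:ℝ)+1) h1
    have h3 : (0:ℝ) ≤ dist x y / 8 := by linarith
    exact mul_le_mul_of_nonneg_left h2 h3
  obtain ⟨g, hg⟩ : ∃ g : ℕ → ℝ, g = fun N : ℕ =>
      dist x y * e N + (e N)^2
        + 20*(1+5*dist x y)^2*(e N + Real.sqrt (dist x y * e N)) := ⟨_, rfl⟩
  have hg0 : ∀ N, 0 ≤ g N := by
    intro N; rw [hg]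
    have := (he0 N).le
    have h5 : (0:ℝ) ≤ 1 + 5*dist x y := by linarith
    positivity
  -- the key distance bound
  have hkey : ∀ n m N : ℕ, N ≤ n → N ≤ m → dist (f n) (f m) ≤ Real.sqrt (g N) := by
    intro n m N hn hm
    have h := keyA hcat (f n) x y (f m) (he0 m) (by linarith [heb m]) (hf1' m) (hf2' m)
    have hfx : dist (f n) x ≤ dist x y / 2 + e n := by
      rw [dist_comm]; exact hf1' n
    have hfy : dist (f n) y ≤ dist x y / 2 + e n := hf2' n
    have hfxt : dist (f n) x ≤ dist x y := by linarith [heb n]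
    have hfyt : dist (f n) y ≤ dist x y := by linarith [heb n]
    have hfm : dist (f n) (f m) ≤ 2 * dist x y := by
      have := dist_triangle (f n) x (f m)
      have h2 : dist x (f m) ≤ dist x y := by linarith [hf1' m, heb m]
      linarith
    -- bound the constant
    have hKb : (1 + dist (f n) (f m) + dist (f n) x + dist (f n) y + dist x y)^2
        ≤ (1+5*dist x y)^2 := by
      have h1 : 1 + dist (f n) (f m) + dist (f n) x + dist (f n) y + dist x y
          ≤ 1+5*dist x y := by linarith
      have h2 : (0:ℝ) ≤ 1 + dist (f n) (f m) + dist (f n) x + dist (f n) y + dist x y := by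
        have := dist_nonneg (x := f n) (y := f m); have := dist_nonneg (x := f n) (y := x)
        have := dist_nonneg (x := f n) (y := y); linarith
      nlinarith [h1, h2]
    -- first part bound
    have hsq : dist (f n) x ^2 ≤ (dist x y / 2 + e n)^2 :=
      by nlinarith [hfx, dist_nonneg (x := f n) (y := x)]
    have hsq2 : dist (f n) y ^2 ≤ (dist x y / 2 + e n)^2 :=
      by nlinarith [hfy, dist_nonneg (x := f n) (y := y)]
    have hw0 : (0:ℝ) ≤ Real.sqrt (dist x y * e m) := Real.sqrt_nonneg _
    have herr : (0:ℝ) ≤ e m + Real.sqrt (dist x y * e m) := by linarith [(he0 m).le]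
    have hKmul := mul_le_mul_of_nonneg_right hKb herr
    have hdist2 : dist (f n) (f m)^2 ≤ g N := by
      have hge : e n ≤ e N := hmono N n hn
      have hge' : e m ≤ e N := hmono N m hm
      have hsqrtmono : Real.sqrt (dist x y * e m) ≤ Real.sqrt (dist x y * e N) :=
        Real.sqrt_le_sqrt (mul_le_mul_of_nonneg_left hge' ht0.le)
      have hC0 : (0:ℝ) ≤ 20*(1+5*dist x y)^2 := by positivity
      have hmono2 : 20*(1+5*dist x y)^2 * (e m + Real.sqrt (dist x y * e m))
          ≤ 20*(1+5*dist x y)^2 * (e N + Real.sqrt (dist x y * e N)) :=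
        mul_le_mul_of_nonneg_left (by linarith) hC0
      simp only [hg]
      have hen0 := (he0 n).le
      have hensq : e n ^ 2 ≤ e N ^ 2 := by
        nlinarith [mul_le_mul hge hge hen0 (he0 N).le]
      linarith [h, hKmul, hsq, hsq2, hmono2, mul_le_mul_of_nonneg_left hge ht0.le, hensq]
    have hd0 : (0:ℝ) ≤ dist (f n) (f m) := dist_nonneg
    exact (Real.le_sqrt hd0 (hg0 N)).mpr hdist2
  -- g tends to zero
  have hetend : Tendsto e atTop (𝓝 0) := by
    rw [he]
    have := tendsto_one_div_add_atTop_nhds_zero_nat.const_mul (dist x y / 8)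
    simpa using this
  have hte : Tendsto (fun N => dist x y * e N) atTop (𝓝 0) := by
    have := hetend.const_mul (dist x y)
    simpa using this
  have hsqrte : Tendsto (fun N => Real.sqrt (dist x y * e N)) atTop (𝓝 0) := by
    have h := (Real.continuous_sqrt.tendsto 0).comp hte
    rw [Real.sqrt_zero] at h; exact h
  have hgtend : Tendsto g atTop (𝓝 0) := by
    rw [hg]
    have h1 := hte.add (hetend.mul hetend)
    have h2 := ((hetend.add hsqrte).const_mul (20*(1+5*dist x y)^2))
    have h3 := h1.add h2
    simp only [mul_zero, zero_mul, add_zero, zero_add] at h3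
    convert h3 using 2 with N
    ring
  have hbtend : Tendsto (fun N => Real.sqrt (g N)) atTop (𝓝 0) := by
    have h := (Real.continuous_sqrt.tendsto 0).comp hgtend
    rw [Real.sqrt_zero] at h; exact h
  have hcauchy : CauchySeq f :=
    cauchySeq_of_le_tendsto_0 _ (fun n m N hn hm => hkey n m N hn hm) hbtend
  obtain ⟨z, hz⟩ := cauchySeq_tendsto_of_complete hcauchy
  refine ⟨z, ?_, ?_⟩
  · have hlim : Tendsto (fun n => dist x (f n)) atTop (𝓝 (dist x z)) :=
      tendsto_const_nhds.dist hz
    have hlow : ∀ n, dist x y / 2 - e n ≤ dist x (f n) := by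
      intro n
      have := dist_triangle x (f n) y
      have h2 := hf2' n
      linarith
    have hup : ∀ n, dist x (f n) ≤ dist x y / 2 + e n := hf1'
    have hlimlow : Tendsto (fun n => dist x y / 2 - e n) atTop (𝓝 (dist x y / 2)) := by
      have h := Tendsto.sub (tendsto_const_nhds : Tendsto (fun _ : ℕ => dist x y / 2) atTop (𝓝 (dist x y / 2))) hetend
      simpa using h
    have hlimup : Tendsto (fun n => dist x y / 2 + e n) atTop (𝓝 (dist x y / 2)) := by
      have h := Tendsto.add (tendsto_const_nhds : Tendsto (fun _ : ℕ => dist x y / 2) atTop (𝓝 (dist x y / 2))) hetend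
      simpa using h
    have := tendsto_of_tendsto_of_tendsto_of_le_of_le hlimlow hlimup hlow hup
    exact tendsto_nhds_unique hlim this
  · have hlim : Tendsto (fun n => dist (f n) y) atTop (𝓝 (dist z y)) :=
      hz.dist tendsto_const_nhds
    have hlow : ∀ n, dist x y / 2 - e n ≤ dist (f n) y := by
      intro n
      have := dist_triangle x (f n) y
      have h2 := hf1' n
      linarith
    have hup : ∀ n, dist (f n) y ≤ dist x y / 2 + e n := hf2'
    have hlimlow : Tendsto (fun n => dist x y / 2 - e n) atTop (𝓝 (dist x y / 2)) := by
      have h := Tendsto.sub (tendsto_const_nhds : Tendsto (fun _ : ℕ => dist x y / 2) atTop (𝓝 (dist x y / 2))) hetend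
      simpa using h
    have hlimup : Tendsto (fun n => dist x y / 2 + e n) atTop (𝓝 (dist x y / 2)) := by
      have h := Tendsto.add (tendsto_const_nhds : Tendsto (fun _ : ℕ => dist x y / 2) atTop (𝓝 (dist x y / 2))) hetend
      simpa using h
    have := tendsto_of_tendsto_of_tendsto_of_le_of_le hlimlow hlimup hlow hup
    exact tendsto_nhds_unique hlim this

theorem closest_point_projection_CAT0 {U : Type*} [MetricSpace U] [CompleteSpace U]
    (hlen : LengthMid U) (hcat : CAT0Cmp U)
    (K : Set U) (hne : K.Nonempty) (hcl : IsClosed K) (hconv : MConvexSet K)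
    (p : U) :
    ∃! z : U, z ∈ K ∧ dist p z = Metric.infDist p K := by
  have hℓ0 : 0 ≤ Metric.infDist p K := Metric.infDist_nonneg
  -- uniqueness part
  have huniq : ∀ z₁ z₂ : U, z₁ ∈ K → z₂ ∈ K → dist p z₁ = Metric.infDist p K →
      dist p z₂ = Metric.infDist p K → z₁ = z₂ := by
    intro z₁ z₂ h1 h2 hd1 hd2
    obtain ⟨z, hz1, hz2⟩ := midB hlen hcat z₁ z₂
    have hzK : z ∈ K := hconv z₁ h1 z₂ h2 z (by rw [hz1, hz2]; ring)
    have hle : Metric.infDist p K ≤ dist p z := Metric.infDist_le_dist_of_mem hzK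
    have hkey := keyC hcat p z₁ z₂ z hz1 hz2
    rw [hd1, hd2] at hkey
    have hsq : Metric.infDist p K ^2 ≤ dist p z^2 := by nlinarith [hle, hℓ0]
    have hz0 : dist z₁ z₂ ^ 2 ≤ 0 := by nlinarith [hkey, hsq]
    have : dist z₁ z₂ = 0 := by
      nlinarith [dist_nonneg (x := z₁) (y := z₂), hz0, sq_nonneg (dist z₁ z₂)]
    exact dist_eq_zero.mp this
  -- minimizing sequence
  have hch : ∀ n : ℕ, ∃ q, q ∈ K ∧ dist p q < Metric.infDist p K + 1/((n:ℝ)+1) := by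
    intro n
    have h := (Metric.infDist_lt_iff hne).mp
      (lt_add_of_pos_right (Metric.infDist p K) (by positivity : (0:ℝ) < 1/((n:ℝ)+1)))
    obtain ⟨q, hq, hd⟩ := h
    exact ⟨q, hq, hd⟩
  choose q hqK hqd using hch
  obtain ⟨u, hu⟩ : ∃ u : ℕ → ℝ, u = fun n : ℕ => 1/((n:ℝ)+1) := ⟨_, rfl⟩
  have hu0 : ∀ n, 0 < u n := by intro n; rw [hu]; positivity
  have humono : ∀ N n : ℕ, N ≤ n → u n ≤ u N := by
    intro N n h; simp only [hu]
    have h1 : (N:ℝ)+1 ≤ (n:ℝ)+1 := by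
      have : (N:ℝ) ≤ (n:ℝ) := Nat.cast_le.mpr h
      linarith
    exact one_div_le_one_div_of_le (by positivity) h1
  have hqd' : ∀ n, dist p (q n) < Metric.infDist p K + u n := by
    intro n; rw [hu]; exact hqd n
  have hql : ∀ n, Metric.infDist p K ≤ dist p (q n) :=
    fun n => Metric.infDist_le_dist_of_mem (hqK n)
  -- Cauchy estimate
  have hkeydist : ∀ n m N : ℕ, N ≤ n → N ≤ m → dist (q n) (q m)
      ≤ Real.sqrt (8*(Metric.infDist p K)*(u N) + 4*(u N)^2) := by
    intro n m N hn hm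
    obtain ⟨z, hz1, hz2⟩ := midB hlen hcat (q n) (q m)
    have hzK : z ∈ K := hconv (q n) (hqK n) (q m) (hqK m) z (by rw [hz1, hz2]; ring)
    have hle : Metric.infDist p K ≤ dist p z := Metric.infDist_le_dist_of_mem hzK
    have hkey := keyC hcat p (q n) (q m) z hz1 hz2
    have hsq : Metric.infDist p K ^2 ≤ dist p z^2 := by nlinarith [hle, hℓ0]
    have hbn : dist p (q n) ≤ Metric.infDist p K + u N :=
      le_trans (hqd' n).le (by linarith [humono N n hn])
    have hbm : dist p (q m) ≤ Metric.infDist p K + u N :=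
      le_trans (hqd' m).le (by linarith [humono N m hm])
    have hbn2 : dist p (q n)^2 ≤ (Metric.infDist p K + u N)^2 := by
      nlinarith [hbn, dist_nonneg (x := p) (y := q n)]
    have hbm2 : dist p (q m)^2 ≤ (Metric.infDist p K + u N)^2 := by
      nlinarith [hbm, dist_nonneg (x := p) (y := q m)]
    have hd2 : dist (q n) (q m)^2 ≤ 8*(Metric.infDist p K)*(u N) + 4*(u N)^2 := by
      nlinarith [hkey, hsq, hbn2, hbm2]
    exact (Real.le_sqrt dist_nonneg (by nlinarith [hℓ0, (hu0 N).le])).mpr hd2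
  -- convergence of the bound
  have hutend : Tendsto u atTop (𝓝 0) := by
    rw [hu]; exact tendsto_one_div_add_atTop_nhds_zero_nat
  have hbtend : Tendsto
      (fun N => Real.sqrt (8*(Metric.infDist p K)*(u N) + 4*(u N)^2)) atTop (𝓝 0) := by
    have h1 : Tendsto (fun N => 8*(Metric.infDist p K)*(u N) + 4*(u N)^2) atTop (𝓝 0) := by
      have ha := hutend.const_mul (8*(Metric.infDist p K))
      have hb := (hutend.mul hutend).const_mul (4:ℝ)
      have := ha.add hb
      simp only [mul_zero, add_zero] at this
      convert this using 2 with N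
      ring
    have h := (Real.continuous_sqrt.tendsto 0).comp h1
    rw [Real.sqrt_zero] at h; exact h
  have hcauchy : CauchySeq q :=
    cauchySeq_of_le_tendsto_0 _ (fun n m N hn hm => hkeydist n m N hn hm) hbtend
  obtain ⟨z, hz⟩ := cauchySeq_tendsto_of_complete hcauchy
  have hzK : z ∈ K := hcl.mem_of_tendsto hz (Filter.Eventually.of_forall hqK)
  have hzd : dist p z = Metric.infDist p K := by
    have hlim : Tendsto (fun n => dist p (q n)) atTop (𝓝 (dist p z)) :=
      tendsto_const_nhds.dist hz
    have hlimup : Tendsto (fun n => Metric.infDist p K + u n) atTop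
        (𝓝 (Metric.infDist p K)) := by
      have h := Tendsto.add (tendsto_const_nhds :
        Tendsto (fun _ : ℕ => Metric.infDist p K) atTop (𝓝 (Metric.infDist p K))) hutend
      simpa using h
    have hsqueeze := tendsto_of_tendsto_of_tendsto_of_le_of_le
      (tendsto_const_nhds : Tendsto (fun _ : ℕ => Metric.infDist p K) atTop
        (𝓝 (Metric.infDist p K))) hlimup hql (fun n => (hqd' n).le)
    exact tendsto_nhds_unique hlim hsqueeze
  exact ⟨z, ⟨hzK, hzd⟩, fun w hw => huniq w z hw.1 hzK hw.2 hzd⟩
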